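/- Let p be an odd prime and let Λ = Λ(0; 1, 0, 0; 0, 1, 0; 0) in the Zorn vector matrices over ℚ_p. Then Λ is an order, its dual is Λ* = Λ(0; 0, −1, 0; −1, 0, 0; 0), there are strict inclusions Λ ⊊ Λ* ⊊ p⁻¹·Λ, and x * y ∈ p⁻¹·Λ for all x, y ∈ Λ*; moreover the ℤ_p-submodule generated by the products {x * y : x, y ∈ Λ*} equals p⁻¹·Λ. (Hence Λ is an order of type 2.) -/

import Mathlib

open Matrix Pointwise

/-- A Zorn vector matrix (split octonion) over `k`. -/
abbrev Zorn (k : Type*) := k × (Fin 3 → k) × (Fin 3 → k) × k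

/-- The Zorn product of two Zorn vector matrices. -/
def zmul {k : Type*} [Field k] (x y : Zorn k) : Zorn k :=
  (x.1 * y.1 + x.2.1 ⬝ᵥ y.2.2.1,
   x.1 • y.2.1 + y.2.2.2 • x.2.1 - x.2.2.1 ⨯₃ y.2.2.1,
   y.1 • x.2.2.1 + x.2.2.2 • y.2.2.1 + x.2.1 ⨯₃ y.2.1,
   x.2.2.2 * y.2.2.2 + x.2.2.1 ⬝ᵥ y.2.1)

/-- The identity Zorn vector matrix. -/
def zone {k : Type*} [Field k] : Zorn k := (1, 0, 0, 1)

/-- The trace of a Zorn vector matrix. -/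
def zT {k : Type*} [Field k] (x : Zorn k) : k := x.1 + x.2.2.2

variable (p : ℕ) [Fact p.Prime]

/-- `a` lies in `p^n ℤ_p ⊆ ℚ_p`. -/
def inLat (n : ℤ) (a : ℚ_[p]) : Prop := ∃ z : ℤ_[p], a = (p : ℚ_[p]) ^ n * (z : ℚ_[p])

/-- The lattice `Λ(a₁; a₂, a₃, a₄; a₅, a₆, a₇; a₈)` of Zorn vector matrices over `ℚ_p`. -/
def Lam (a₁ a₂ a₃ a₄ a₅ a₆ a₇ a₈ : ℤ) : Set (Zorn ℚ_[p]) :=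
  {x | inLat p a₁ x.1 ∧ inLat p a₂ (x.2.1 0) ∧ inLat p a₃ (x.2.1 1) ∧
       inLat p a₄ (x.2.1 2) ∧ inLat p a₅ (x.2.2.1 0) ∧ inLat p a₆ (x.2.2.1 1) ∧
       inLat p a₇ (x.2.2.1 2) ∧ inLat p a₈ x.2.2.2}

/-- A set of Zorn vector matrices is an order if it contains `1` and is
closed under the Zorn product. -/
def IsOrder (S : Set (Zorn ℚ_[p])) : Prop :=
  zone ∈ S ∧ ∀ x ∈ S, ∀ y ∈ S, zmul x y ∈ S

/-- The dual of a set of Zorn vector matrices with respect to the trace form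
`T(x * y)`. -/
def dualLat (S : Set (Zorn ℚ_[p])) : Set (Zorn ℚ_[p]) :=
  {x | ∀ y ∈ S, ∃ z : ℤ_[p], (z : ℚ_[p]) = zT (zmul x y)}

variable {p}

lemma p_ne_zero : (p : ℚ_[p]) ≠ 0 :=
  Nat.cast_ne_zero.mpr (Fact.out : p.Prime).ne_zero

lemma p_real_pos : (0:ℝ) < (p:ℝ) := by
  exact_mod_cast (Fact.out : p.Prime).pos

lemma inLat_iff {n : ℤ} {a : ℚ_[p]} : inLat p n a ↔ ‖a‖ ≤ (p : ℝ) ^ (-n) := by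
  constructor
  · rintro ⟨z, rfl⟩
    rw [norm_mul, Padic.norm_p_zpow, PadicInt.padic_norm_e_of_padicInt]
    calc (p:ℝ)^(-n) * ‖z‖ ≤ (p:ℝ)^(-n) * 1 := by
          exact mul_le_mul_of_nonneg_left z.norm_le_one (by positivity)
      _ = (p:ℝ)^(-n) := mul_one _
  · intro h
    have hc : ‖(p:ℚ_[p])^(-n) * a‖ ≤ 1 := by
      rw [norm_mul, Padic.norm_p_zpow, neg_neg]
      calc (p:ℝ)^n * ‖a‖ ≤ (p:ℝ)^n * (p:ℝ)^(-n) := by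
            exact mul_le_mul_of_nonneg_left h (by positivity)
        _ = 1 := by
            rw [← zpow_add₀ (ne_of_gt p_real_pos)]; simp
    refine ⟨⟨(p:ℚ_[p])^(-n) * a, hc⟩, ?_⟩
    show a = (p:ℚ_[p])^n * ((p:ℚ_[p])^(-n) * a)
    rw [← mul_assoc, ← zpow_add₀ p_ne_zero]; simp

lemma inLat_zero (n : ℤ) : inLat p n (0 : ℚ_[p]) := ⟨0, by simp⟩

lemma inLat_coe (z : ℤ_[p]) : inLat p 0 (z : ℚ_[p]) := ⟨z, by simp⟩

lemma inLat_one : inLat p 0 (1 : ℚ_[p]) := ⟨1, by simp⟩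

lemma inLat_add {n : ℤ} {a b : ℚ_[p]} (ha : inLat p n a) (hb : inLat p n b) :
    inLat p n (a + b) := by
  obtain ⟨z, rfl⟩ := ha; obtain ⟨w, rfl⟩ := hb
  exact ⟨z + w, by push_cast; ring⟩

lemma inLat_neg {n : ℤ} {a : ℚ_[p]} (ha : inLat p n a) : inLat p n (-a) := by
  obtain ⟨z, rfl⟩ := ha; exact ⟨-z, by push_cast; ring⟩

lemma inLat_sub {n : ℤ} {a b : ℚ_[p]} (ha : inLat p n a) (hb : inLat p n b) :
    inLat p n (a - b) := by
  rw [sub_eq_add_neg]; exact inLat_add ha (inLat_neg hb)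

lemma inLat_mono {m n : ℤ} {a : ℚ_[p]} (h : m ≤ n) (ha : inLat p n a) : inLat p m a := by
  rw [inLat_iff] at ha ⊢
  refine ha.trans ?_
  have h1 : (1:ℝ) ≤ (p:ℝ) := by exact_mod_cast (Fact.out : p.Prime).one_lt.le
  exact zpow_le_zpow_right₀ h1 (by omega)

lemma inLat_mul {m n : ℤ} {a b : ℚ_[p]} (ha : inLat p m a) (hb : inLat p n b) :
    inLat p (m + n) (a * b) := by
  obtain ⟨z, rfl⟩ := ha; obtain ⟨w, rfl⟩ := hb
  exact ⟨z * w, by push_cast [zpow_add₀ p_ne_zero]; ring⟩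

lemma inLat_mul_le {k m n : ℤ} {a b : ℚ_[p]} (h : k ≤ m + n) (ha : inLat p m a)
    (hb : inLat p n b) : inLat p k (a * b) :=
  inLat_mono h (inLat_mul ha hb)

lemma inLat_smul (z : ℤ_[p]) {n : ℤ} {a : ℚ_[p]} (ha : inLat p n a) :
    inLat p n (z • a) := by
  obtain ⟨w, rfl⟩ := ha
  exact ⟨z * w, by push_cast [Algebra.smul_def, PadicInt.algebraMap_apply]; ring⟩

lemma inLat_pmul {n : ℤ} {a : ℚ_[p]} : inLat p n ((p:ℚ_[p]) * a) ↔ inLat p (n-1) a := by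
  rw [inLat_iff, inLat_iff, norm_mul, Padic.norm_p, neg_sub,
    inv_mul_le_iff₀ p_real_pos, sub_eq_add_neg, zpow_add₀ (ne_of_gt p_real_pos), zpow_one]

lemma not_inLat_one : ¬ inLat p 1 (1 : ℚ_[p]) := by
  rw [inLat_iff]
  simp only [norm_one]
  intro h
  have h1 : (1:ℝ) < (p:ℝ) := by exact_mod_cast (Fact.out : p.Prime).one_lt
  nlinarith [zpow_neg_one (p:ℝ) ▸ h, inv_lt_one_of_one_lt₀ h1]

lemma not_inLat_pinv : ¬ inLat p 0 ((p:ℚ_[p]))⁻¹ := by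
  rw [inLat_iff]
  simp only [norm_inv, Padic.norm_p, inv_inv, neg_zero, zpow_zero]
  intro h
  have h1 : (1:ℝ) < (p:ℝ) := by exact_mod_cast (Fact.out : p.Prime).one_lt
  linarith

lemma inLat_pinv : inLat p (-1) ((p:ℚ_[p]))⁻¹ := ⟨1, by simp [_root_.zpow_neg, zpow_one]⟩

lemma inLat_p : inLat p 1 ((p:ℚ_[p])) := ⟨1, by simp⟩

lemma inLat_zero_exp_iff {a : ℚ_[p]} : inLat p 0 a ↔ ∃ z : ℤ_[p], (z : ℚ_[p]) = a := by
  constructor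
  · rintro ⟨z, rfl⟩; exact ⟨z, by simp⟩
  · rintro ⟨z, rfl⟩; exact inLat_coe z

lemma Lam_mono {a₁ a₂ a₃ a₄ a₅ a₆ a₇ a₈ b₁ b₂ b₃ b₄ b₅ b₆ b₇ b₈ : ℤ}
    (h₁ : b₁ ≤ a₁) (h₂ : b₂ ≤ a₂) (h₃ : b₃ ≤ a₃) (h₄ : b₄ ≤ a₄) (h₅ : b₅ ≤ a₅)
    (h₆ : b₆ ≤ a₆) (h₇ : b₇ ≤ a₇) (h₈ : b₈ ≤ a₈) :
    Lam p a₁ a₂ a₃ a₄ a₅ a₆ a₇ a₈ ⊆ Lam p b₁ b₂ b₃ b₄ b₅ b₆ b₇ b₈ := by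
  rintro x ⟨c₁, c₂, c₃, c₄, c₅, c₆, c₇, c₈⟩
  exact ⟨inLat_mono h₁ c₁, inLat_mono h₂ c₂, inLat_mono h₃ c₃, inLat_mono h₄ c₄,
    inLat_mono h₅ c₅, inLat_mono h₆ c₆, inLat_mono h₇ c₇, inLat_mono h₈ c₈⟩

section Main

/-- `Λ` -/
local notation "L0" => Lam p 0 1 0 0 0 1 0 0
/-- `Λ*` -/
local notation "L1" => Lam p 0 0 (-1) 0 (-1) 0 0 0
/-- `p⁻¹ Λ` -/
local notation "L2" => Lam p (-1) 0 (-1) (-1) (-1) 0 (-1) (-1)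

lemma lam_isOrder : IsOrder p L0 := by
  constructor
  · exact ⟨inLat_one, inLat_zero _, inLat_zero _, inLat_zero _, inLat_zero _,
      inLat_zero _, inLat_zero _, inLat_one⟩
  · rintro x ⟨a, v0, v1, v2, w0, w1, w2, d⟩ y ⟨a', v0', v1', v2', w0', w1', w2', d'⟩
    refine ⟨?_, ?_, ?_, ?_, ?_, ?_, ?_, ?_⟩ <;>
      simp only [zmul, dotProduct, Fin.sum_univ_three, Pi.add_apply, Pi.sub_apply,
        Pi.smul_apply, smul_eq_mul, cross_apply, Matrix.cons_val_zero, Matrix.cons_val_one,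
        Matrix.head_cons, Matrix.cons_val_two, Matrix.tail_cons]
    · exact inLat_add (inLat_mul_le (by norm_num) a a')
        (inLat_add (inLat_add (inLat_mul_le (by norm_num) v0 w0')
          (inLat_mul_le (by norm_num) v1 w1')) (inLat_mul_le (by norm_num) v2 w2'))
    · exact inLat_sub (inLat_add (inLat_mul_le (by norm_num) a v0')
        (inLat_mul_le (by norm_num) d' v0))
        (inLat_sub (inLat_mul_le (by norm_num) w1 w2') (inLat_mul_le (by norm_num) w2 w1'))
    · exact inLat_sub (inLat_add (inLat_mul_le (by norm_num) a v1')
        (inLat_mul_le (by norm_num) d' v1))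
        (inLat_sub (inLat_mul_le (by norm_num) w2 w0') (inLat_mul_le (by norm_num) w0 w2'))
    · exact inLat_sub (inLat_add (inLat_mul_le (by norm_num) a v2')
        (inLat_mul_le (by norm_num) d' v2))
        (inLat_sub (inLat_mul_le (by norm_num) w0 w1') (inLat_mul_le (by norm_num) w1 w0'))
    · exact inLat_add (inLat_add (inLat_mul_le (by norm_num) a' w0)
        (inLat_mul_le (by norm_num) d w0'))
        (inLat_sub (inLat_mul_le (by norm_num) v1 v2') (inLat_mul_le (by norm_num) v2 v1'))
    · exact inLat_add (inLat_add (inLat_mul_le (by norm_num) a' w1)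
        (inLat_mul_le (by norm_num) d w1'))
        (inLat_sub (inLat_mul_le (by norm_num) v2 v0') (inLat_mul_le (by norm_num) v0 v2'))
    · exact inLat_add (inLat_add (inLat_mul_le (by norm_num) a' w2)
        (inLat_mul_le (by norm_num) d w2'))
        (inLat_sub (inLat_mul_le (by norm_num) v0 v1') (inLat_mul_le (by norm_num) v1 v0'))
    · exact inLat_add (inLat_mul_le (by norm_num) d d')
        (inLat_add (inLat_add (inLat_mul_le (by norm_num) w0 v0')
          (inLat_mul_le (by norm_num) w1 v1')) (inLat_mul_le (by norm_num) w2 v2'))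

lemma dual_lam_eq : dualLat p L0 = L1 := by
  ext x
  constructor
  · intro hx
    have key : ∀ y ∈ L0, inLat p 0 (zT (zmul x y)) := by
      intro y hy
      exact inLat_zero_exp_iff.mpr (hx y hy)
    refine ⟨?_, ?_, ?_, ?_, ?_, ?_, ?_, ?_⟩
    · have := key ((1 : ℚ_[p]), 0, 0, 0)
        ⟨inLat_one, inLat_zero _, inLat_zero _, inLat_zero _, inLat_zero _, inLat_zero _,
          inLat_zero _, inLat_zero _⟩
      simpa [zT, zmul, dotProduct, Fin.sum_univ_three] using this
    · have := key ((0 : ℚ_[p]), 0, ![1, 0, 0], 0)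
        ⟨inLat_zero _, inLat_zero _, inLat_zero _, inLat_zero _, inLat_one, inLat_zero _,
          inLat_zero _, inLat_zero _⟩
      simpa [zT, zmul, dotProduct, Fin.sum_univ_three] using this
    · have := key ((0 : ℚ_[p]), 0, ![0, (p:ℚ_[p]), 0], 0)
        ⟨inLat_zero _, inLat_zero _, inLat_zero _, inLat_zero _, inLat_zero _, inLat_p,
          inLat_zero _, inLat_zero _⟩
      simp only [zT, zmul, dotProduct, Fin.sum_univ_three] at this
      simp only [Matrix.cons_val_zero, Matrix.cons_val_one, Matrix.head_cons,
        Matrix.cons_val_two, Matrix.tail_cons, Pi.zero_apply, mul_zero, zero_mul,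
        add_zero, zero_add, mul_comm] at this
      simpa using inLat_pmul.mp this
    · have := key ((0 : ℚ_[p]), 0, ![0, 0, 1], 0)
        ⟨inLat_zero _, inLat_zero _, inLat_zero _, inLat_zero _, inLat_zero _, inLat_zero _,
          inLat_one, inLat_zero _⟩
      simpa [zT, zmul, dotProduct, Fin.sum_univ_three] using this
    · have := key ((0 : ℚ_[p]), ![(p:ℚ_[p]), 0, 0], 0, 0)
        ⟨inLat_zero _, inLat_p, inLat_zero _, inLat_zero _, inLat_zero _, inLat_zero _,
          inLat_zero _, inLat_zero _⟩
      simp only [zT, zmul, dotProduct, Fin.sum_univ_three] at this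
      simp only [Matrix.cons_val_zero, Matrix.cons_val_one, Matrix.head_cons,
        Matrix.cons_val_two, Matrix.tail_cons, Pi.zero_apply, mul_zero, zero_mul,
        add_zero, zero_add, mul_comm] at this
      simpa using inLat_pmul.mp this
    · have := key ((0 : ℚ_[p]), ![0, 1, 0], 0, 0)
        ⟨inLat_zero _, inLat_zero _, inLat_one, inLat_zero _, inLat_zero _, inLat_zero _,
          inLat_zero _, inLat_zero _⟩
      simpa [zT, zmul, dotProduct, Fin.sum_univ_three] using this
    · have := key ((0 : ℚ_[p]), ![0, 0, 1], 0, 0)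
        ⟨inLat_zero _, inLat_zero _, inLat_zero _, inLat_one, inLat_zero _, inLat_zero _,
          inLat_zero _, inLat_zero _⟩
      simpa [zT, zmul, dotProduct, Fin.sum_univ_three] using this
    · have := key ((0 : ℚ_[p]), 0, 0, 1)
        ⟨inLat_zero _, inLat_zero _, inLat_zero _, inLat_zero _, inLat_zero _, inLat_zero _,
          inLat_zero _, inLat_one⟩
      simpa [zT, zmul, dotProduct, Fin.sum_univ_three] using this
  · rintro ⟨a, v0, v1, v2, w0, w1, w2, d⟩ y ⟨a', v0', v1', v2', w0', w1', w2', d'⟩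
    rw [← inLat_zero_exp_iff]
    simp only [zT, zmul, dotProduct, Fin.sum_univ_three]
    refine inLat_add (inLat_add (inLat_mul_le (by norm_num) a a') ?_)
      (inLat_add (inLat_mul_le (by norm_num) d d') ?_)
    · exact inLat_add (inLat_add (inLat_mul_le (by norm_num) v0 w0')
        (inLat_mul_le (by norm_num) v1 w1')) (inLat_mul_le (by norm_num) v2 w2')
    · exact inLat_add (inLat_add (inLat_mul_le (by norm_num) w0 v0')
        (inLat_mul_le (by norm_num) w1 v1')) (inLat_mul_le (by norm_num) w2 v2')

lemma smul_lam_eq : ((p : ℚ_[p])⁻¹ • L0 : Set (Zorn ℚ_[p])) = L2 := by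
  ext x
  rw [Set.mem_smul_set_iff_inv_smul_mem₀ (inv_ne_zero p_ne_zero), inv_inv]
  have hmem : ((p:ℚ_[p]) • x) ∈ L0 ↔
      inLat p 0 ((p:ℚ_[p]) * x.1) ∧ inLat p 1 ((p:ℚ_[p]) * x.2.1 0) ∧
      inLat p 0 ((p:ℚ_[p]) * x.2.1 1) ∧ inLat p 0 ((p:ℚ_[p]) * x.2.1 2) ∧
      inLat p 0 ((p:ℚ_[p]) * x.2.2.1 0) ∧ inLat p 1 ((p:ℚ_[p]) * x.2.2.1 1) ∧
      inLat p 0 ((p:ℚ_[p]) * x.2.2.1 2) ∧ inLat p 0 ((p:ℚ_[p]) * x.2.2.2) := by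
    rfl
  rw [hmem]
  constructor
  · rintro ⟨h1, h2, h3, h4, h5, h6, h7, h8⟩
    exact ⟨by simpa using inLat_pmul.mp h1, by simpa using inLat_pmul.mp h2,
      by simpa using inLat_pmul.mp h3, by simpa using inLat_pmul.mp h4,
      by simpa using inLat_pmul.mp h5, by simpa using inLat_pmul.mp h6,
      by simpa using inLat_pmul.mp h7, by simpa using inLat_pmul.mp h8⟩
  · rintro ⟨h1, h2, h3, h4, h5, h6, h7, h8⟩
    exact ⟨inLat_pmul.mpr (by simpa using h1), inLat_pmul.mpr (by simpa using h2),
      inLat_pmul.mpr (by simpa using h3), inLat_pmul.mpr (by simpa using h4),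
      inLat_pmul.mpr (by simpa using h5), inLat_pmul.mpr (by simpa using h6),
      inLat_pmul.mpr (by simpa using h7), inLat_pmul.mpr (by simpa using h8)⟩

lemma dual_mul_mem : ∀ x ∈ L1, ∀ y ∈ L1, zmul x y ∈ L2 := by
  rintro x ⟨a, v0, v1, v2, w0, w1, w2, d⟩ y ⟨a', v0', v1', v2', w0', w1', w2', d'⟩
  refine ⟨?_, ?_, ?_, ?_, ?_, ?_, ?_, ?_⟩ <;>
    simp only [zmul, dotProduct, Fin.sum_univ_three, Pi.add_apply, Pi.sub_apply,
      Pi.smul_apply, smul_eq_mul, cross_apply, Matrix.cons_val_zero, Matrix.cons_val_one,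
      Matrix.head_cons, Matrix.cons_val_two, Matrix.tail_cons]
  · exact inLat_add (inLat_mul_le (by norm_num) a a')
      (inLat_add (inLat_add (inLat_mul_le (by norm_num) v0 w0')
        (inLat_mul_le (by norm_num) v1 w1')) (inLat_mul_le (by norm_num) v2 w2'))
  · exact inLat_sub (inLat_add (inLat_mul_le (by norm_num) a v0')
      (inLat_mul_le (by norm_num) d' v0))
      (inLat_sub (inLat_mul_le (by norm_num) w1 w2') (inLat_mul_le (by norm_num) w2 w1'))
  · exact inLat_sub (inLat_add (inLat_mul_le (by norm_num) a v1')
      (inLat_mul_le (by norm_num) d' v1))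
      (inLat_sub (inLat_mul_le (by norm_num) w2 w0') (inLat_mul_le (by norm_num) w0 w2'))
  · exact inLat_sub (inLat_add (inLat_mul_le (by norm_num) a v2')
      (inLat_mul_le (by norm_num) d' v2))
      (inLat_sub (inLat_mul_le (by norm_num) w0 w1') (inLat_mul_le (by norm_num) w1 w0'))
  · exact inLat_add (inLat_add (inLat_mul_le (by norm_num) a' w0)
      (inLat_mul_le (by norm_num) d w0'))
      (inLat_sub (inLat_mul_le (by norm_num) v1 v2') (inLat_mul_le (by norm_num) v2 v1'))
  · exact inLat_add (inLat_add (inLat_mul_le (by norm_num) a' w1)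
      (inLat_mul_le (by norm_num) d w1'))
      (inLat_sub (inLat_mul_le (by norm_num) v2 v0') (inLat_mul_le (by norm_num) v0 v2'))
  · exact inLat_add (inLat_add (inLat_mul_le (by norm_num) a' w2)
      (inLat_mul_le (by norm_num) d w2'))
      (inLat_sub (inLat_mul_le (by norm_num) v0 v1') (inLat_mul_le (by norm_num) v1 v0'))
  · exact inLat_add (inLat_mul_le (by norm_num) d d')
      (inLat_add (inLat_add (inLat_mul_le (by norm_num) w0 v0')
        (inLat_mul_le (by norm_num) w1 v1')) (inLat_mul_le (by norm_num) w2 v2'))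


/-- The lattice as a `ℤ_p`-submodule. -/
def LamM (a₁ a₂ a₃ a₄ a₅ a₆ a₇ a₈ : ℤ) : Submodule ℤ_[p] (Zorn ℚ_[p]) where
  carrier := Lam p a₁ a₂ a₃ a₄ a₅ a₆ a₇ a₈
  add_mem' := by
    rintro x y ⟨c₁, c₂, c₃, c₄, c₅, c₆, c₇, c₈⟩ ⟨d₁, d₂, d₃, d₄, d₅, d₆, d₇, d₈⟩
    exact ⟨inLat_add c₁ d₁, inLat_add c₂ d₂, inLat_add c₃ d₃, inLat_add c₄ d₄,
      inLat_add c₅ d₅, inLat_add c₆ d₆, inLat_add c₇ d₇, inLat_add c₈ d₈⟩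
  zero_mem' := ⟨inLat_zero _, inLat_zero _, inLat_zero _, inLat_zero _, inLat_zero _,
    inLat_zero _, inLat_zero _, inLat_zero _⟩
  smul_mem' := by
    rintro c x ⟨c₁, c₂, c₃, c₄, c₅, c₆, c₇, c₈⟩
    exact ⟨inLat_smul c c₁, inLat_smul c c₂, inLat_smul c c₃, inLat_smul c c₄,
      inLat_smul c c₅, inLat_smul c c₆, inLat_smul c c₇, inLat_smul c c₈⟩

lemma span_eq :
    (Submodule.span ℤ_[p]
        {z : Zorn ℚ_[p] | ∃ x ∈ dualLat p L0, ∃ y ∈ dualLat p L0, z = zmul x y} :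
      Set (Zorn ℚ_[p])) = ((p : ℚ_[p])⁻¹ • L0) := by
  rw [dual_lam_eq, smul_lam_eq]
  set S : Set (Zorn ℚ_[p]) := {z | ∃ x ∈ L1, ∃ y ∈ L1, z = zmul x y} with hS
  apply Set.Subset.antisymm
  · intro z hz
    have hle : Submodule.span ℤ_[p] S ≤ LamM (-1) 0 (-1) (-1) (-1) 0 (-1) (-1) := by
      rw [Submodule.span_le]
      rintro w ⟨x, hx, y, hy, rfl⟩
      exact dual_mul_mem x hx y hy
    exact hle hz
  · rintro ⟨xa, xv, xw, xd⟩
      ⟨⟨z₁, h₁⟩, ⟨z₂, h₂⟩, ⟨z₃, h₃⟩, ⟨z₄, h₄⟩, ⟨z₅, h₅⟩, ⟨z₆, h₆⟩, ⟨z₇, h₇⟩, ⟨z₈, h₈⟩⟩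
    -- membership of the eight factors in `Λ*`
    have mfa : ((1:ℚ_[p]), 0, 0, 0) ∈ L1 :=
      ⟨inLat_one, inLat_zero _, inLat_zero _, inLat_zero _, inLat_zero _, inLat_zero _,
        inLat_zero _, inLat_zero _⟩
    have mfd : ((0:ℚ_[p]), 0, 0, 1) ∈ L1 :=
      ⟨inLat_zero _, inLat_zero _, inLat_zero _, inLat_zero _, inLat_zero _, inLat_zero _,
        inLat_zero _, inLat_one⟩
    have mfv0 : ((0:ℚ_[p]), ![(1:ℚ_[p]),0,0], 0, 0) ∈ L1 :=
      ⟨inLat_zero _, inLat_one, inLat_zero _, inLat_zero _, inLat_zero _, inLat_zero _,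
        inLat_zero _, inLat_zero _⟩
    have mfv1 : ((0:ℚ_[p]), ![0,(p:ℚ_[p])⁻¹,0], 0, 0) ∈ L1 :=
      ⟨inLat_zero _, inLat_zero _, inLat_pinv, inLat_zero _, inLat_zero _, inLat_zero _,
        inLat_zero _, inLat_zero _⟩
    have mfw0 : ((0:ℚ_[p]), 0, ![(p:ℚ_[p])⁻¹,0,0], 0) ∈ L1 :=
      ⟨inLat_zero _, inLat_zero _, inLat_zero _, inLat_zero _, inLat_pinv, inLat_zero _,
        inLat_zero _, inLat_zero _⟩
    have mfw1 : ((0:ℚ_[p]), 0, ![0,(1:ℚ_[p]),0], 0) ∈ L1 :=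
      ⟨inLat_zero _, inLat_zero _, inLat_zero _, inLat_zero _, inLat_zero _, inLat_one,
        inLat_zero _, inLat_zero _⟩
    -- the eight generators as products
    have m1 : (((p:ℚ_[p])⁻¹, 0, 0, 0) : Zorn ℚ_[p]) ∈ Submodule.span ℤ_[p] S :=
      Submodule.subset_span ⟨_, mfv0, _, mfw0, by
        simp [Prod.ext_iff, funext_iff, Fin.forall_fin_succ, zmul, cross_apply, dotProduct,
          Fin.sum_univ_three]⟩
    have m2 : (((0:ℚ_[p]), ![(1:ℚ_[p]),0,0], 0, 0) : Zorn ℚ_[p]) ∈ Submodule.span ℤ_[p] S :=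
      Submodule.subset_span ⟨_, mfa, _, mfv0, by
        simp [Prod.ext_iff, funext_iff, Fin.forall_fin_succ, zmul, cross_apply, dotProduct,
          Fin.sum_univ_three]⟩
    have m3 : (((0:ℚ_[p]), ![0,(p:ℚ_[p])⁻¹,0], 0, 0) : Zorn ℚ_[p]) ∈ Submodule.span ℤ_[p] S :=
      Submodule.subset_span ⟨_, mfa, _, mfv1, by
        simp [Prod.ext_iff, funext_iff, Fin.forall_fin_succ, zmul, cross_apply, dotProduct,
          Fin.sum_univ_three]⟩
    have m4 : (((0:ℚ_[p]), ![0,0,-(p:ℚ_[p])⁻¹], 0, 0) : Zorn ℚ_[p]) ∈ Submodule.span ℤ_[p] S :=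
      Submodule.subset_span ⟨_, mfw0, _, mfw1, by
        simp [Prod.ext_iff, funext_iff, Fin.forall_fin_succ, zmul, cross_apply, dotProduct,
          Fin.sum_univ_three]⟩
    have m5 : (((0:ℚ_[p]), 0, ![(p:ℚ_[p])⁻¹,0,0], 0) : Zorn ℚ_[p]) ∈ Submodule.span ℤ_[p] S :=
      Submodule.subset_span ⟨_, mfd, _, mfw0, by
        simp [Prod.ext_iff, funext_iff, Fin.forall_fin_succ, zmul, cross_apply, dotProduct,
          Fin.sum_univ_three]⟩
    have m6 : (((0:ℚ_[p]), 0, ![0,(1:ℚ_[p]),0], 0) : Zorn ℚ_[p]) ∈ Submodule.span ℤ_[p] S :=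
      Submodule.subset_span ⟨_, mfd, _, mfw1, by
        simp [Prod.ext_iff, funext_iff, Fin.forall_fin_succ, zmul, cross_apply, dotProduct,
          Fin.sum_univ_three]⟩
    have m7 : (((0:ℚ_[p]), 0, ![0,0,-(p:ℚ_[p])⁻¹], 0) : Zorn ℚ_[p]) ∈ Submodule.span ℤ_[p] S :=
      Submodule.subset_span ⟨_, mfv1, _, mfv0, by
        simp [Prod.ext_iff, funext_iff, Fin.forall_fin_succ, zmul, cross_apply, dotProduct,
          Fin.sum_univ_three]⟩
    have m8 : (((0:ℚ_[p]), 0, 0, (p:ℚ_[p])⁻¹) : Zorn ℚ_[p]) ∈ Submodule.span ℤ_[p] S :=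
      Submodule.subset_span ⟨_, mfw0, _, mfv0, by
        simp [Prod.ext_iff, funext_iff, Fin.forall_fin_succ, zmul, cross_apply, dotProduct,
          Fin.sum_univ_three]⟩
    have hx_eq : ((xa, xv, xw, xd) : Zorn ℚ_[p]) =
        z₁ • (((p:ℚ_[p])⁻¹, 0, 0, 0) : Zorn ℚ_[p]) +
        z₂ • (((0:ℚ_[p]), ![(1:ℚ_[p]),0,0], 0, 0) : Zorn ℚ_[p]) +
        z₃ • (((0:ℚ_[p]), ![0,(p:ℚ_[p])⁻¹,0], 0, 0) : Zorn ℚ_[p]) +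
        (-z₄) • (((0:ℚ_[p]), ![0,0,-(p:ℚ_[p])⁻¹], 0, 0) : Zorn ℚ_[p]) +
        z₅ • (((0:ℚ_[p]), 0, ![(p:ℚ_[p])⁻¹,0,0], 0) : Zorn ℚ_[p]) +
        z₆ • (((0:ℚ_[p]), 0, ![0,(1:ℚ_[p]),0], 0) : Zorn ℚ_[p]) +
        (-z₇) • (((0:ℚ_[p]), 0, ![0,0,-(p:ℚ_[p])⁻¹], 0) : Zorn ℚ_[p]) +
        z₈ • (((0:ℚ_[p]), 0, 0, (p:ℚ_[p])⁻¹) : Zorn ℚ_[p]) := by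
      have hz : ∀ (c : ℤ_[p]) (a : ℚ_[p]), c • a = (c : ℚ_[p]) * a := fun c a => by
        rw [Algebra.smul_def, PadicInt.algebraMap_apply]
      simp only [Prod.ext_iff, funext_iff, Fin.forall_fin_succ, Prod.fst_add, Prod.snd_add,
        Prod.smul_fst, Prod.smul_snd, Pi.add_apply, Pi.smul_apply, Pi.zero_apply, hz,
        Matrix.cons_val_zero, Matrix.cons_val_one, Matrix.head_cons, Matrix.cons_val_two,
        Matrix.tail_cons]
      dsimp only at h₁ h₂ h₃ h₄ h₅ h₆ h₇ h₈
      norm_num [h₁, h₂, h₃, h₄, h₅, h₆, h₇, h₈, _root_.zpow_neg, zpow_one, Fin.forall_fin_succ,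
        Matrix.cons_val_zero, Matrix.cons_val_one, Matrix.head_cons, Matrix.cons_val_two,
        Matrix.tail_cons, mul_comm]
    show ((xa, xv, xw, xd) : Zorn ℚ_[p]) ∈ Submodule.span ℤ_[p] S
    rw [hx_eq]
    exact Submodule.add_mem _ (Submodule.add_mem _ (Submodule.add_mem _ (Submodule.add_mem _
      (Submodule.add_mem _ (Submodule.add_mem _ (Submodule.add_mem _
        (Submodule.smul_mem _ _ m1) (Submodule.smul_mem _ _ m2)) (Submodule.smul_mem _ _ m3))
        (Submodule.smul_mem _ _ m4)) (Submodule.smul_mem _ _ m5)) (Submodule.smul_mem _ _ m6))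
        (Submodule.smul_mem _ _ m7)) (Submodule.smul_mem _ _ m8)

end Main

variable (p)

/-- `Λ = Λ(0; 1, 0, 0; 0, 1, 0; 0)` is an order of type 2: its dual is
`Λ(0; 0, −1, 0; −1, 0, 0; 0)`, we have `Λ ⊊ Λ* ⊊ p⁻¹Λ`, products of elements
of `Λ*` lie in `p⁻¹Λ`, and the `ℤ_p`-submodule generated by these products is
all of `p⁻¹Λ`. -/
theorem lam_type_two (hp : p ≠ 2) :
    IsOrder p (Lam p 0 1 0 0 0 1 0 0) ∧
    dualLat p (Lam p 0 1 0 0 0 1 0 0) = Lam p 0 0 (-1) 0 (-1) 0 0 0 ∧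
    Lam p 0 1 0 0 0 1 0 0 ⊂ dualLat p (Lam p 0 1 0 0 0 1 0 0) ∧
    dualLat p (Lam p 0 1 0 0 0 1 0 0) ⊂ ((p : ℚ_[p])⁻¹ • Lam p 0 1 0 0 0 1 0 0) ∧
    (∀ x ∈ dualLat p (Lam p 0 1 0 0 0 1 0 0), ∀ y ∈ dualLat p (Lam p 0 1 0 0 0 1 0 0),
      zmul x y ∈ ((p : ℚ_[p])⁻¹ • Lam p 0 1 0 0 0 1 0 0)) ∧
    (Submodule.span ℤ_[p]
        {z : Zorn ℚ_[p] | ∃ x ∈ dualLat p (Lam p 0 1 0 0 0 1 0 0),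
          ∃ y ∈ dualLat p (Lam p 0 1 0 0 0 1 0 0), z = zmul x y} : Set (Zorn ℚ_[p])) =
      ((p : ℚ_[p])⁻¹ • Lam p 0 1 0 0 0 1 0 0) := by
  refine ⟨lam_isOrder, dual_lam_eq, ?_, ?_, ?_, span_eq⟩
  · rw [dual_lam_eq]
    rw [Set.ssubset_iff_of_subset (Lam_mono (by norm_num) (by norm_num) (by norm_num)
      (by norm_num) (by norm_num) (by norm_num) (by norm_num) (by norm_num))]
    refine ⟨((0:ℚ_[p]), ![(1:ℚ_[p]),0,0], 0, 0), ?_, ?_⟩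
    · exact ⟨inLat_zero _, inLat_one, inLat_zero _, inLat_zero _, inLat_zero _, inLat_zero _,
        inLat_zero _, inLat_zero _⟩
    · intro h
      exact not_inLat_one h.2.1
  · rw [dual_lam_eq, smul_lam_eq]
    rw [Set.ssubset_iff_of_subset (Lam_mono (by norm_num) (by norm_num) (by norm_num)
      (by norm_num) (by norm_num) (by norm_num) (by norm_num) (by norm_num))]
    refine ⟨(((p:ℚ_[p])⁻¹, 0, 0, 0) : Zorn ℚ_[p]), ?_, ?_⟩
    · exact ⟨inLat_pinv, inLat_zero _, inLat_zero _, inLat_zero _, inLat_zero _, inLat_zero _,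
        inLat_zero _, inLat_zero _⟩
    · intro h
      exact not_inLat_pinv h.1
  · intro x hx y hy
    rw [dual_lam_eq] at hx hy
    rw [smul_lam_eq]
    exact dual_mul_mem x hx y hy
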